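/- arXiv:1604.07743 — 2 statements merged into one kernel-verified Lean document; each statement's English description precedes it below -/
import Mathlib

section
/- For every infinite cardinal μ there exist linear orders I₀ ⊆ I such that |I₀| = μ, |I| = μ⁺, and I₀ is dense in I (i.e., for all i < j in I there exists k ∈ I₀ with i < k < j). Concretely, letting χ be least such that μ < μ^χ, the set of functions μ^{<χ} ordered lexicographically sits densely inside a subset of μ^{≤χ} of cardinality μ⁺ ordered lexicographically. -/
universe u

open Cardinal

/-- In the order type of a limit ordinal, every element has a successor `y` such that
everything below `y` is `≤ x`. -/
private lemma toType_exists_succ {o : Ordinal.{u}} (ho : Order.IsSuccLimit o) (x : o.ToType) :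
    ∃ y, x < y ∧ ∀ b, b < y → b ≤ x := by
  haveI : IsWellOrder o.ToType (· < ·) := isWellOrder_lt
  have h1 : Order.succ (Ordinal.typein (α := o.ToType) (· < ·) x) <
      Ordinal.type (α := o.ToType) (· < ·) := by
    rw [Ordinal.type_toType]
    exact ho.succ_lt (Ordinal.typein_lt_self x)
  refine ⟨Ordinal.enum (· < ·) ⟨_, Set.mem_Iio.2 h1⟩, ?_, ?_⟩
  · rw [← Ordinal.typein_lt_typein (α := o.ToType) (· < ·)]
    erw [Ordinal.typein_enum]
    exact Order.lt_succ _
  · intro b hb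
    have hb' := (Ordinal.typein_lt_typein (α := o.ToType) (· < ·)).2 hb
    erw [Ordinal.typein_enum] at hb'
    exact (Ordinal.typein_le_typein' o).1 (Order.lt_succ_iff.1 hb')

/-- For every infinite cardinal `μ` there are linear orders `I₀ ⊆ I` with `|I₀| = μ`,
`|I| = μ⁺`, and `I₀` dense in `I`. -/
theorem exists_dense_suborder (μ : Cardinal.{u}) (hμ : ℵ₀ ≤ μ) :
    ∃ (I : Type u) (_ : LinearOrder I) (I₀ : Set I),
      #↥I₀ = μ ∧ #I = Order.succ μ ∧
        ∀ i j : I, i < j → ∃ k ∈ I₀, i < k ∧ k < j := by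
  classical
  -- the least cardinal `χ` with `μ < μ ^ χ`
  set s : Set Cardinal.{u} := {κ | μ < μ ^ κ} with hs_def
  have hμs : μ ∈ s := by
    have h2 : (2 : Cardinal.{u}) ≤ μ := (nat_lt_aleph0 2).le.trans hμ
    exact (Cardinal.cantor μ).trans_le (power_le_power_right h2)
  set χ : Cardinal.{u} := sInf s with hχ_def
  have hχs : μ < μ ^ χ := csInf_mem ⟨μ, hμs⟩
  have hχμ : χ ≤ μ := csInf_le' hμs
  have hmin : ∀ κ, κ < χ → μ ^ κ ≤ μ := by
    intro κ hκ
    by_contra h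
    have : χ ≤ κ := csInf_le' (show κ ∈ s from not_le.1 h)
    exact this.not_gt hκ
  have hχω : ℵ₀ ≤ χ := by
    by_contra h
    obtain ⟨n, hn⟩ := Cardinal.lt_aleph0.1 (not_le.1 h)
    rcases Nat.eq_zero_or_pos n with hn0 | hn0
    · rw [hn, hn0] at hχs
      simp only [Nat.cast_zero, power_zero] at hχs
      exact hχs.not_ge (one_lt_aleph0.le.trans hμ)
    · have : μ ^ ((n : ℕ) : Cardinal.{u}) = μ := by
        rw [Cardinal.power_natCast]
        exact Cardinal.power_nat_eq hμ hn0
      rw [hn, this] at hχs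
      exact hχs.false
  have hordχ : Order.IsSuccLimit χ.ord := Cardinal.isSuccLimit_ord hχω
  have hordμ : Order.IsSuccLimit μ.ord := Cardinal.isSuccLimit_ord hμ
  set A : Type u := χ.ord.ToType with hA_def
  set M : Type u := μ.ord.ToType with hM_def
  have hmkA : #A = χ := Cardinal.mk_ord_toType χ
  have hmkM : #M = μ := Cardinal.mk_ord_toType μ
  haveI : Nonempty M := by
    rw [← Cardinal.mk_ne_zero_iff, hmkM]
    exact fun h => (Cardinal.aleph0_pos.trans_le hμ).ne' h
  haveI : Nonempty A := by
    rw [← Cardinal.mk_ne_zero_iff, hmkA]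
    exact fun h => (Cardinal.aleph0_pos.trans_le hχω).ne' h
  let z : M := Classical.arbitrary M
  -- the big lex order
  set L : Type u := Lex (A → M) with hL_def
  have hmkL : #L = μ ^ χ := by
    rw [hL_def]
    have h1 : #(Lex (A → M)) = #(A → M) := Cardinal.mk_congr ofLex
    rw [h1, ← Cardinal.power_def, hmkM, hmkA]
  -- the small dense set: functions with bounded support
  set D : Set L := {f | ∃ a : A, ∀ b : A, a < b → ofLex f b = z} with hD_def
  have hDle : #↥D ≤ μ := by
    have inj : ∀ f : ↥D, ∃ a : A, ∀ b : A, a < b → ofLex f.1 b = z := fun f => f.2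
    choose w hw using inj
    let F : ↥D → Σ a : A, (Set.Iic a → M) := fun f => ⟨w f, fun b => ofLex f.1 b.1⟩
    have hF : Function.Injective F := by
      intro f g hfg
      have hfg' : (⟨w f, fun b => ofLex f.1 b.1⟩ : Σ a : A, (Set.Iic a → M)) =
          ⟨w g, fun b => ofLex g.1 b.1⟩ := hfg
      obtain ⟨h1, h2⟩ := Sigma.mk.inj_iff.1 hfg'
      rw [← h1] at h2
      have h3 := eq_of_heq h2
      apply Subtype.ext
      apply ofLex.injective
      funext b
      rcases le_or_gt b (w f) with hb | hb
      · exact congrFun h3 ⟨b, hb⟩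
      · rw [hw f b hb, hw g b (h1 ▸ hb)]
    calc #↥D ≤ #(Σ a : A, (Set.Iic a → M)) := Cardinal.mk_le_of_injective hF
      _ = Cardinal.sum (fun a : A => #(Set.Iic a → M)) := Cardinal.mk_sigma _
      _ ≤ Cardinal.sum (fun _ : A => μ) := by
          apply Cardinal.sum_le_sum
          intro a
          rw [← Cardinal.power_def, hmkM]
          apply hmin
          have h1 : #(Set.Iio a) < χ := Cardinal.mk_Iio_ord_toType a
          have h2 : #(Set.Iic a) ≤ #(Set.Iio a) + 1 := by
            rw [← Set.Iio_insert]
            exact Cardinal.mk_insert_le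
          exact h2.trans_lt (Cardinal.add_lt_of_lt hχω h1 (one_lt_aleph0.trans_le hχω))
      _ = #A * μ := Cardinal.sum_const' _ _
      _ = χ * μ := by rw [hmkA]
      _ ≤ μ * μ := mul_le_mul_left hχμ μ
      _ = μ := Cardinal.mul_eq_self hμ
  have hDge : μ ≤ #↥D := by
    obtain ⟨a₀⟩ := (inferInstance : Nonempty A)
    let G : M → ↥D := fun m =>
      ⟨toLex (fun b => if b = a₀ then m else z), ⟨a₀, fun b hb => by
        simp only [ofLex_toLex]
        rw [if_neg (ne_of_gt hb)]⟩⟩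
    have hG : Function.Injective G := by
      intro m m' h
      have h1 : (toLex (fun b => if b = a₀ then m else z) : L) =
          toLex (fun b => if b = a₀ then m' else z) := Subtype.ext_iff.1 h
      have h2 := congrFun (toLex.injective.eq_iff.1 h1) a₀
      simpa using h2
    rw [← hmkM]
    exact Cardinal.mk_le_of_injective hG
  have hD : #↥D = μ := le_antisymm hDle hDge
  -- a set of size `succ μ`
  have hLbig : Order.succ μ ≤ #L := by
    rw [hmkL]; exact Order.succ_le_of_lt hχs
  obtain ⟨B, hB⟩ := Cardinal.le_mk_iff_exists_set.1 hLbig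
  set S : Set L := D ∪ B with hS_def
  have hmkS : #↥S = Order.succ μ := by
    apply le_antisymm
    · calc #↥S ≤ #↥D + #↥B := Cardinal.mk_union_le _ _
        _ = μ + Order.succ μ := by rw [hD, hB]
        _ = Order.succ μ := Cardinal.add_eq_right (hμ.trans (Order.le_succ μ)) (Order.le_succ μ)
    · rw [← hB]
      exact Cardinal.mk_le_mk_of_subset Set.subset_union_right
  refine ⟨↥S, inferInstance, {x : ↥S | (x : L) ∈ D}, ?_, hmkS, ?_⟩
  · -- cardinality of I₀
    rw [← hD]
    apply Cardinal.mk_congr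
    exact ⟨fun x => ⟨x.1.1, x.2⟩, fun d => ⟨⟨d.1, Or.inl d.2⟩, d.2⟩,
      fun x => rfl, fun d => rfl⟩
  · -- density
    rintro ⟨i, hiS⟩ ⟨j, hjS⟩ hij
    have hij' : Pi.Lex (· < ·) (@fun _ => (· < ·)) (ofLex i) (ofLex j) := hij
    obtain ⟨δ, hagree, hδ⟩ := hij'
    obtain ⟨ε, hδε, hεle⟩ := toType_exists_succ hordχ δ
    obtain ⟨m', hm', -⟩ := toType_exists_succ hordμ (ofLex i ε)
    set k : L := toLex (fun b => if b < ε then ofLex i b else if b = ε then m' else z)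
      with hk_def
    have hk_lt : ∀ b, b < ε → ofLex k b = ofLex i b := by
      intro b hb
      rw [hk_def]; simp only [ofLex_toLex]; simp [hb]
    have hk_eq : ofLex k ε = m' := by
      rw [hk_def]; simp only [ofLex_toLex]; simp
    have hk_gt : ∀ b, ε < b → ofLex k b = z := by
      intro b hb
      rw [hk_def]; simp only [ofLex_toLex]
      rw [if_neg (not_lt_of_gt hb), if_neg (ne_of_gt hb)]
    have hkD : k ∈ D := ⟨ε, hk_gt⟩
    have hik : i < k := by
      refine ⟨ε, fun b hb => (hk_lt b hb).symm, ?_⟩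
      show ofLex i ε < ofLex k ε
      rw [hk_eq]; exact hm'
    have hkj : k < j := by
      refine ⟨δ, fun b hb => ?_, ?_⟩
      · show ofLex k b = ofLex j b
        rw [hk_lt b (hb.trans hδε)]
        exact hagree b hb
      · show ofLex k δ < ofLex j δ
        rw [hk_lt δ hδε]
        exact hδ
    exact ⟨⟨k, Or.inl hkD⟩, hkD, Subtype.mk_lt_mk.2 hik, Subtype.mk_lt_mk.2 hkj⟩
end

section
/- Let K be an AEC semisolvable in λ > LS(K). Then for every M ∈ K of cardinality λ and every A ⊆ |M| with |A| = μ, where μ ≥ LS(K), μ = μ^κ, and μ < λ, the number of Galois types of κ-tuples over A computed in M is at most μ: |gS^κ(A; M)| ≤ μ. -/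
universe u v w

open FirstOrder Cardinal Set

/-- A bundled structure in the vocabulary `τ`. -/
structure ModelOf (τ : FirstOrder.Language.{u, u}) : Type (u + 1) where
  carrier : Type u
  str : τ.Structure carrier

attribute [instance] ModelOf.str

/-- An abstract elementary class: a class of `τ`-structures together with a strong
substructure relation `SSub` (with distinguished inclusion embeddings `incl`),
satisfying the axioms of AECs. -/
structure AEC : Type (u + 1) where
  τ : FirstOrder.Language.{u, u}
  Mem : Set (ModelOf.{u} τ)
  SSub : ModelOf.{u} τ → ModelOf.{u} τ → Prop
  incl : ∀ {M N : ModelOf.{u} τ}, SSub M N → (M.carrier ↪[τ] N.carrier)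
  ssub_mem : ∀ {M N : ModelOf.{u} τ}, SSub M N → M ∈ Mem ∧ N ∈ Mem
  ssub_refl : ∀ M ∈ Mem, SSub M M
  incl_refl : ∀ (M : ModelOf.{u} τ) (h : SSub M M) (x : M.carrier), incl h x = x
  ssub_trans : ∀ {M N P : ModelOf.{u} τ}, SSub M N → SSub N P → SSub M P
  incl_trans : ∀ {M N P : ModelOf.{u} τ} (h₁ : SSub M N) (h₂ : SSub N P) (x : M.carrier),
    incl (ssub_trans h₁ h₂) x = incl h₂ (incl h₁ x)
  iso_closed : ∀ {M N : ModelOf.{u} τ}, M ∈ Mem → Nonempty (M.carrier ≃[τ] N.carrier) → N ∈ Mem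
  LS : Cardinal.{u}
  infinite_LS : ℵ₀ ≤ LS
  card_τ_le : τ.card ≤ LS
  downward_LST : ∀ N ∈ Mem, ∀ A : Set N.carrier,
    ∃ (M : ModelOf.{u} τ) (h : SSub M N), A ⊆ Set.range (incl h) ∧ #M.carrier ≤ #↥A + LS
  chains : ∀ (δ : Ordinal.{u}), Order.IsSuccLimit δ → ∀ C : Ordinal.{u} → ModelOf.{u} τ,
    (∀ i j : Ordinal.{u}, i < j → j < δ → SSub (C i) (C j)) →
    ∃ (M : ModelOf.{u} τ) (h : ∀ i < δ, SSub (C i) M),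
      ∀ x : M.carrier, ∃ (i : Ordinal.{u}) (hi : i < δ), x ∈ Set.range (incl (h i hi))

namespace AEC

variable (K : AEC.{u})

/-- `f` is a `K`-embedding: it is an isomorphism onto a strong substructure of its codomain. -/
def IsKEmb {M N : ModelOf.{u} K.τ} (f : M.carrier ↪[K.τ] N.carrier) : Prop :=
  ∃ (P : ModelOf.{u} K.τ) (h : K.SSub P N) (e : M.carrier ≃[K.τ] P.carrier),
    ∀ x, K.incl h (e x) = f x

/-- A "pre-type": an `α`-tuple in a model of `K`, over a base set enumerated by `β`. -/
structure PTy (K : AEC.{u}) (α : Type v) (β : Type w) : Type (max (u + 1) v w) where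
  N : ModelOf.{u} K.τ
  mem : N ∈ K.Mem
  base : β → N.carrier
  t : α → N.carrier

/-- Atomic equivalence of pre-types: the tuples can be mapped to each other by a pair of
`K`-embeddings into a common extension fixing the base. -/
def gtpAtom {α : Type v} {β : Type w} (p q : PTy K α β) : Prop :=
  ∃ (R : ModelOf.{u} K.τ) (_ : R ∈ K.Mem)
    (f : p.N.carrier ↪[K.τ] R.carrier) (g : q.N.carrier ↪[K.τ] R.carrier),
    K.IsKEmb f ∧ K.IsKEmb g ∧ (∀ x, f (p.base x) = g (q.base x)) ∧ ∀ x, f (p.t x) = g (q.t x)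

/-- Equality of Galois (orbital) types: the transitive closure of atomic equivalence. -/
def GtpEq {α : Type v} {β : Type w} : PTy K α β → PTy K α β → Prop :=
  Relation.EqvGen (K.gtpAtom)

/-- `gtp (b / A; N) = gtp (c / A; N)`: equality of Galois types over a set `A`,
both computed in `N`. -/
def gtpEqOver {N : ModelOf.{u} K.τ} (hN : N ∈ K.Mem) (A : Set N.carrier)
    {α : Type v} (b c : α → N.carrier) : Prop :=
  K.GtpEq (⟨N, hN, Subtype.val, b⟩ : PTy K α ↥A) ⟨N, hN, Subtype.val, c⟩

/-- The number of Galois types of `α`-tuples over the set `A` as computed in `N`. -/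
noncomputable def gSCard {N : ModelOf.{u} K.τ} (hN : N ∈ K.Mem) (A : Set N.carrier)
    (α : Type u) : Cardinal.{u} :=
  #(Quot (fun b c : α → N.carrier => K.gtpEqOver hN A b c))

/-- `N` has the `(κ, μ)`-order property of length `θ`. -/
def HasOrderPropLen (N : ModelOf.{u} K.τ) (hN : N ∈ K.Mem) (κ μ θ : Cardinal.{u}) : Prop :=
  ∃ A : Set N.carrier, #↥A ≤ μ ∧
    ∃ a : θ.ord.ToType → κ.ord.ToType → N.carrier,
      ∀ i₀ i₁ j₀ j₁ : θ.ord.ToType, i₀ < i₁ → j₀ < j₁ →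
        ¬ K.gtpEqOver hN A (Sum.elim (a i₀) (a i₁)) (Sum.elim (a j₁) (a j₀))

/-- `K` has the `(κ, μ)`-order property of length `θ`. -/
def ClassOrderPropLen (κ μ θ : Cardinal.{u}) : Prop :=
  ∃ (N : ModelOf.{u} K.τ) (hN : N ∈ K.Mem), K.HasOrderPropLen N hN κ μ θ

/-- `K` has the `(κ, μ)`-order property (of every length). -/
def ClassOrderProp (κ μ : Cardinal.{u}) : Prop :=
  ∀ θ : Cardinal.{u}, K.ClassOrderPropLen κ μ θ

/-- `K` has arbitrarily large models. -/
def HasArbLarge : Prop := ∀ c : Cardinal.{u}, ∃ M ∈ K.Mem, c ≤ #M.carrier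

end AEC

/-- An EM blueprint `Φ` proper for linear orders for the AEC `K`: a vocabulary `τΦ ⊇ τ(K)`
together with a functorial assignment of EM models `EM (I, Φ)` generated by order
indiscernibles, whose `τ(K)`-reducts are members of `K`, functorially in `I`. -/
structure EMBlueprint (K : AEC.{u}) : Type (u + 1) where
  τΦ : FirstOrder.Language.{u, u}
  lhom : K.τ →ᴸ τΦ
  EM : (I : Type u) → [inst : LinearOrder I] → ModelOf.{u} τΦ
  emMap : (I : Type u) → [inst : LinearOrder I] → (I ↪ (EM I).carrier)
  /-- `EM (I, Φ)` is generated by the spine `I`. -/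
  gen : ∀ (I : Type u) [LinearOrder I],
    FirstOrder.Language.Substructure.closure τΦ (Set.range (emMap I)) = ⊤
  /-- the spine is a sequence of quantifier-free order indiscernibles, uniformly in `I`. -/
  indisc : ∀ (I J : Type u) [LinearOrder I] [LinearOrder J] (n : ℕ)
    (ii : Fin n → I) (jj : Fin n → J), StrictMono ii → StrictMono jj →
    ∀ φ : τΦ.Formula (Fin n), φ.IsQF →
      (φ.Realize (fun k => emMap I (ii k)) ↔ φ.Realize (fun k => emMap J (jj k)))
  red_mem : ∀ (I : Type u) [LinearOrder I],
    (⟨(EM I).carrier, lhom.reduct (EM I).carrier⟩ : ModelOf.{u} K.τ) ∈ K.Mem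
  card_le : ∀ (I : Type u) [LinearOrder I],
    #(EM I).carrier ≤ max #I (max τΦ.card K.LS)
  emb : ∀ (I J : Type u) [LinearOrder I] [LinearOrder J], (I ↪o J) →
    ((EM I).carrier ↪[τΦ] (EM J).carrier)
  emb_emMap : ∀ (I J : Type u) [LinearOrder I] [LinearOrder J] (f : I ↪o J) (i : I),
    emb I J f (emMap I i) = emMap J (f i)
  red_ssub : ∀ (I J : Type u) [LinearOrder I] [LinearOrder J] (f : I ↪o J),
    ∃ g : @FirstOrder.Language.Embedding K.τ (EM I).carrier (EM J).carrier
        (lhom.reduct _) (lhom.reduct _),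
      K.IsKEmb (M := ⟨(EM I).carrier, lhom.reduct _⟩) (N := ⟨(EM J).carrier, lhom.reduct _⟩) g ∧
      ∀ x, g x = emb I J f x

/-- `EM_{τ(K)} (I, Φ)`: the `τ(K)`-reduct of the EM model. -/
def EMBlueprint.red {K : AEC.{u}} (Φ : EMBlueprint K) (I : Type u) [LinearOrder I] :
    ModelOf.{u} K.τ :=
  ⟨(Φ.EM I).carrier, Φ.lhom.reduct (Φ.EM I).carrier⟩

theorem EMBlueprint.red_mem' {K : AEC.{u}} (Φ : EMBlueprint K) (I : Type u) [LinearOrder I] :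
    Φ.red I ∈ K.Mem := Φ.red_mem I

/-- `Υ_μ[K]`: the set of EM blueprints for `K` with vocabulary of size at most `μ`. -/
def Upsilon (K : AEC.{u}) (μ : Cardinal.{u}) : Set (EMBlueprint K) :=
  {Φ | Φ.τΦ.card ≤ μ}

namespace AEC

variable (K : AEC.{u})

/-- `⟨a i : i ∈ I⟩` is a strictly indiscernible sequence of `α`-tuples in `N`. -/
def StrictlyIndisc {N : ModelOf.{u} K.τ} (_hN : N ∈ K.Mem) {I : Type u} [LinearOrder I]
    {α : Type v} (a : I → α → N.carrier) : Prop :=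
  ∃ (Φ : EMBlueprint K) (f : N.carrier ↪[K.τ] (Φ.red I).carrier),
    K.IsKEmb f ∧ ∀ j : α, ∃ ρ : Φ.τΦ.Functions 1,
      ∀ i : I, f (a i j) =
        FirstOrder.Language.Structure.funMap (M := (Φ.EM I).carrier) ρ ![Φ.emMap I i]

/-- Strict indiscernibility over a set `A`: some enumeration of `A` appended to each tuple
yields a strictly indiscernible sequence. -/
def StrictlyIndiscOver {N : ModelOf.{u} K.τ} (hN : N ∈ K.Mem) {I : Type u} [LinearOrder I]
    {α : Type v} (a : I → α → N.carrier) (A : Set N.carrier) : Prop :=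
  ∃ (β : Type u) (e : β → N.carrier), Set.range e = A ∧
    K.StrictlyIndisc hN (fun i => Sum.elim (a i) e)

/-- `⟨a i : i ∈ I⟩` is indiscernible over `A` in `N` (with respect to Galois types). -/
def IndiscOver {N : ModelOf.{u} K.τ} (hN : N ∈ K.Mem) {I : Type u} [LinearOrder I]
    {α : Type v} (a : I → α → N.carrier) (A : Set N.carrier) : Prop :=
  ∀ (n : ℕ) (ii jj : Fin n → I), StrictMono ii → StrictMono jj →
    K.gtpEqOver hN A (fun p : Fin n × α => a (ii p.1) p.2) (fun p : Fin n × α => a (jj p.1) p.2)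

end AEC
namespace AEC

variable (K : AEC.{u})

/-- `M` is universal in `K_lam`: every model of cardinality `lam` `K`-embeds into it. -/
def UniversalIn (M : ModelOf.{u} K.τ) (lam : Cardinal.{u}) : Prop :=
  M ∈ K.Mem ∧ #M.carrier = lam ∧
    ∀ N ∈ K.Mem, #N.carrier = lam →
      ∃ f : N.carrier ↪[K.τ] M.carrier, K.IsKEmb f

/-- `K` is semisolvable in `lam`: some EM blueprint with vocabulary of size `≤ LS (K)`
produces universal models in `K_lam` over every linear order of cardinality `lam`. -/
def Semisolvable (lam : Cardinal.{u}) : Prop :=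
  ∃ Φ ∈ Upsilon K K.LS, ∀ (I : Type u) (_ : LinearOrder I), #I = lam →
    K.UniversalIn (Φ.red I) lam

/-- `M` has a proper strong extension. -/
def HasProperExt (M : ModelOf.{u} K.τ) : Prop :=
  ∃ (N : ModelOf.{u} K.τ) (h : K.SSub M N), Set.range (K.incl h) ≠ Set.univ

/-- `M` is superlimit in `lam`. -/
def Superlimit (M : ModelOf.{u} K.τ) (lam : Cardinal.{u}) : Prop :=
  K.UniversalIn M lam ∧ K.HasProperExt M ∧
    ∀ (δ : Ordinal.{u}), Order.IsSuccLimit δ → δ < (Order.succ lam).ord →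
      ∀ (C : Ordinal.{u} → ModelOf.{u} K.τ)
        (hC : ∀ i j : Ordinal.{u}, i ≤ j → j ≤ δ → K.SSub (C i) (C j)),
        (∀ i ≤ δ, #(C i).carrier = lam) →
        (∀ (i : Ordinal.{u}) (hiδ : i ≤ δ), Order.IsSuccLimit i →
          ∀ x : (C i).carrier, ∃ j : Ordinal.{u}, ∃ hj : j < i,
            x ∈ Set.range (K.incl (hC j i hj.le hiδ))) →
        (∀ i < δ, Nonempty ((C i).carrier ≃[K.τ] M.carrier)) →
        Nonempty ((C δ).carrier ≃[K.τ] M.carrier)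

/-- `K` is solvable in `lam`, witnessed by `Φ`. -/
def SolvableWith (Φ : EMBlueprint K) (lam : Cardinal.{u}) : Prop :=
  Φ ∈ Upsilon K K.LS ∧ ∀ (I : Type u) (_ : LinearOrder I), #I = lam →
    K.Superlimit (Φ.red I) lam

/-- `K` is solvable in `lam`. -/
def Solvable (lam : Cardinal.{u}) : Prop := ∃ Φ : EMBlueprint K, K.SolvableWith Φ lam

/-- `K` is categorical in `lam`. -/
def Categorical (lam : Cardinal.{u}) : Prop :=
  (∃ M ∈ K.Mem, #M.carrier = lam) ∧
    ∀ M ∈ K.Mem, ∀ N ∈ K.Mem, #M.carrier = lam → #N.carrier = lam →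
      Nonempty (M.carrier ≃[K.τ] N.carrier)

/-- `M` is `μ`-(Galois-)saturated: every Galois type over a strong substructure of
cardinality `< μ` is realized in `M`. -/
def Saturated (M : ModelOf.{u} K.τ) (hM : M ∈ K.Mem) (μ : Cardinal.{u}) : Prop :=
  ∀ (N : ModelOf.{u} K.τ) (hNM : K.SSub N M), #N.carrier < μ →
    ∀ (W : ModelOf.{u} K.τ) (hNW : K.SSub N W) (a : W.carrier),
      ∃ b : M.carrier,
        K.GtpEq (⟨W, (K.ssub_mem hNW).2, K.incl hNW, fun _ : PUnit.{u + 1} => a⟩ :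
            PTy K PUnit.{u + 1} N.carrier)
          ⟨M, hM, K.incl hNM, fun _ => b⟩

/-- `K_{< lam}` has amalgamation. -/
def AmalgamationBelow (lam : Cardinal.{u}) : Prop :=
  ∀ (M₀ M₁ M₂ : ModelOf.{u} K.τ) (h₁ : K.SSub M₀ M₁) (h₂ : K.SSub M₀ M₂),
    #M₀.carrier < lam → #M₁.carrier < lam → #M₂.carrier < lam →
    ∃ (N : ModelOf.{u} K.τ) (_ : N ∈ K.Mem)
      (f : M₁.carrier ↪[K.τ] N.carrier) (g : M₂.carrier ↪[K.τ] N.carrier),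
      K.IsKEmb f ∧ K.IsKEmb g ∧ ∀ x : M₀.carrier, f (K.incl h₁ x) = g (K.incl h₂ x)

/-- `K_{< lam}` has no maximal models. -/
def NoMaxBelow (lam : Cardinal.{u}) : Prop :=
  ∀ M ∈ K.Mem, #M.carrier < lam → K.HasProperExt M

/-- `K_μ` has joint embedding. -/
def JEPAt (μ : Cardinal.{u}) : Prop :=
  ∀ M ∈ K.Mem, ∀ N ∈ K.Mem, #M.carrier = μ → #N.carrier = μ →
    ∃ (P : ModelOf.{u} K.τ) (_ : P ∈ K.Mem)
      (f : M.carrier ↪[K.τ] P.carrier) (g : N.carrier ↪[K.τ] P.carrier),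
      K.IsKEmb f ∧ K.IsKEmb g

/-- `K_μ` has amalgamation. -/
def AmalgamationAt (μ : Cardinal.{u}) : Prop :=
  ∀ (M₀ M₁ M₂ : ModelOf.{u} K.τ) (h₁ : K.SSub M₀ M₁) (h₂ : K.SSub M₀ M₂),
    #M₀.carrier = μ → #M₁.carrier = μ → #M₂.carrier = μ →
    ∃ (N : ModelOf.{u} K.τ) (_ : N ∈ K.Mem)
      (f : M₁.carrier ↪[K.τ] N.carrier) (g : M₂.carrier ↪[K.τ] N.carrier),
      K.IsKEmb f ∧ K.IsKEmb g ∧ ∀ x : M₀.carrier, f (K.incl h₁ x) = g (K.incl h₂ x)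

/-- `K_μ` has no maximal models. -/
def NoMaxAt (μ : Cardinal.{u}) : Prop :=
  ∀ M ∈ K.Mem, #M.carrier = μ → K.HasProperExt M

/-- `M` is universal over `M₀` (both of cardinality `μ`). -/
def UniversalOver (μ : Cardinal.{u}) (M M₀ : ModelOf.{u} K.τ) : Prop :=
  ∃ h : K.SSub M₀ M, #M.carrier = μ ∧ #M₀.carrier = μ ∧
    ∀ (N : ModelOf.{u} K.τ) (hN : K.SSub M₀ N), #N.carrier = μ →
      ∃ f : N.carrier ↪[K.τ] M.carrier, K.IsKEmb f ∧
        ∀ x : M₀.carrier, f (K.incl hN x) = K.incl h x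

/-- `M` is a `(μ, δ)`-limit model over `M₀` for some limit `δ < μ⁺`. -/
def IsLimitOver (μ : Cardinal.{u}) (M M₀ : ModelOf.{u} K.τ) : Prop :=
  ∃ δ : Ordinal.{u}, Order.IsSuccLimit δ ∧ δ < (Order.succ μ).ord ∧
    ∃ (C : Ordinal.{u} → ModelOf.{u} K.τ)
      (hC : ∀ i j : Ordinal.{u}, i ≤ j → j ≤ δ → K.SSub (C i) (C j)),
      C 0 = M₀ ∧ C δ = M ∧ (∀ i ≤ δ, #(C i).carrier = μ) ∧
      (∀ i < δ, K.UniversalOver μ (C (i + 1)) (C i)) ∧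
      ∀ (i : Ordinal.{u}) (hiδ : i ≤ δ), Order.IsSuccLimit i → ∀ x : (C i).carrier,
        ∃ (j : Ordinal.{u}) (hj : j < i), x ∈ Set.range (K.incl (hC j i hj.le hiδ))

/-- `gtp (a / M; W)` `μ`-splits over `N`, where `N ≤ M ≤ W` and `a ∈ W`. -/
def MuSplits (μ : Cardinal.{u}) {W M N : ModelOf.{u} K.τ} (hW : W ∈ K.Mem)
    (hMW : K.SSub M W) (_hNM : K.SSub N M) (a : W.carrier) : Prop :=
  ∃ (M₁ M₂ : ModelOf.{u} K.τ) (h₁ : K.SSub M₁ M) (h₂ : K.SSub M₂ M)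
    (_hN₁ : K.SSub N M₁) (_hN₂ : K.SSub N M₂),
    #M₁.carrier = μ ∧ #M₂.carrier = μ ∧
    ∃ f : M₁.carrier ≃[K.τ] M₂.carrier, K.IsKEmb f.toEmbedding ∧
      (∀ x : N.carrier, f (K.incl _hN₁ x) = K.incl _hN₂ x) ∧
      ¬ K.GtpEq
        (⟨W, hW, K.incl (K.ssub_trans h₁ hMW), fun _ : PUnit.{u + 1} => a⟩ :
          PTy K PUnit.{u + 1} M₁.carrier)
        ⟨W, hW, fun x => K.incl (K.ssub_trans h₂ hMW) (f x), fun _ => a⟩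

/-- `gtp (a / M₀; W)` is algebraic: `a` is an element of `M₀`. -/
def Algebraic {W M₀ : ModelOf.{u} K.τ} (h : K.SSub M₀ W) (a : W.carrier) : Prop :=
  a ∈ Set.range (K.incl h)

/-- A Galois type over the model `M`: a pair of an extension of `M` and an element of it. -/
def STyOver (M : ModelOf.{u} K.τ) : Type (u + 1) :=
  {x : Σ N : ModelOf.{u} K.τ, N.carrier // K.SSub M x.1}

/-- Equality of Galois types over the model `M`. -/
def styEq {M : ModelOf.{u} K.τ} (p q : K.STyOver M) : Prop :=
  K.GtpEq
    (⟨p.1.1, (K.ssub_mem p.2).2, K.incl p.2, fun _ : PUnit.{u + 1} => p.1.2⟩ :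
      PTy K PUnit.{u + 1} M.carrier)
    ⟨q.1.1, (K.ssub_mem q.2).2, K.incl q.2, fun _ => q.1.2⟩

/-- The number of Galois types over the model `M` (as a `Cardinal.{u+1}`). -/
noncomputable def gsModCard (M : ModelOf.{u} K.τ) : Cardinal.{u + 1} :=
  #(Quot (K.styEq (M := M)))

/-- `K` is stable in `μ`. -/
def StableIn (μ : Cardinal.{u}) : Prop :=
  ∀ M ∈ K.Mem, #M.carrier = μ → K.gsModCard M ≤ Cardinal.lift.{u + 1} μ

/-- No long splitting chains in `μ`. -/
def NoLongSplittingChains (μ : Cardinal.{u}) : Prop :=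
  ∀ δ : Ordinal.{u}, Order.IsSuccLimit δ → δ < (Order.succ μ).ord →
    ∀ (C : Ordinal.{u} → ModelOf.{u} K.τ)
      (hC : ∀ i j : Ordinal.{u}, i ≤ j → j ≤ δ → K.SSub (C i) (C j)),
      (∀ i ≤ δ, #(C i).carrier = μ) →
      (∀ i < δ, K.UniversalOver μ (C (i + 1)) (C i)) →
      (∀ x : (C δ).carrier, ∃ (j : Ordinal.{u}) (hj : j < δ),
        x ∈ Set.range (K.incl (hC j δ hj.le le_rfl))) →
      ∀ (W : ModelOf.{u} K.τ) (hW : W ∈ K.Mem) (hCW : K.SSub (C δ) W) (a : W.carrier),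
        ∃ (i : Ordinal.{u}) (hi : i < δ), ¬ K.MuSplits μ hW hCW (hC i δ hi.le le_rfl) a

/-- `K` is `μ`-superstable. -/
def Superstable (μ : Cardinal.{u}) : Prop :=
  K.LS ≤ μ ∧ (∃ M ∈ K.Mem, #M.carrier = μ) ∧ K.JEPAt μ ∧ K.AmalgamationAt μ ∧
    K.NoMaxAt μ ∧ K.StableIn μ ∧ K.NoLongSplittingChains μ

/-- `M₀` is an amalgamation base in `K_μ`. -/
def AmalgBase (μ : Cardinal.{u}) (M₀ : ModelOf.{u} K.τ) : Prop :=
  M₀ ∈ K.Mem ∧ #M₀.carrier = μ ∧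
    ∀ (M₁ M₂ : ModelOf.{u} K.τ) (h₁ : K.SSub M₀ M₁) (h₂ : K.SSub M₀ M₂),
      #M₁.carrier = μ → #M₂.carrier = μ →
      ∃ (N : ModelOf.{u} K.τ) (_ : N ∈ K.Mem)
        (f : M₁.carrier ↪[K.τ] N.carrier) (g : M₂.carrier ↪[K.τ] N.carrier),
        K.IsKEmb f ∧ K.IsKEmb g ∧ ∀ x : M₀.carrier, f (K.incl h₁ x) = g (K.incl h₂ x)

/-- `K` has `μ`-symmetry (with the extra requirement `P N` on the base, used for the
Shelah–Villaveces context; take `P := fun _ => True` for the plain notion). -/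
def HasSymmetryAux (μ : Cardinal.{u}) (P : ModelOf.{u} K.τ → Prop) : Prop :=
  ∀ (N M₀ M W : ModelOf.{u} K.τ) (hW : W ∈ K.Mem) (hMW : K.SSub M W)
    (hNM₀ : K.SSub N M₀) (hM₀M : K.SSub M₀ M) (a : M.carrier) (b : W.carrier),
    P N →
    #N.carrier = μ → #M₀.carrier = μ → #M.carrier = μ →
    K.UniversalOver μ M M₀ → K.IsLimitOver μ M₀ N →
    a ∉ Set.range (K.incl hM₀M) →
    ¬ K.MuSplits μ hW (K.ssub_trans hM₀M hMW) hNM₀ (K.incl hMW a) →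
    ¬ K.Algebraic (K.ssub_trans hM₀M hMW) b →
    ¬ K.MuSplits μ hW hMW hM₀M b →
    ∃ (W' : ModelOf.{u} K.τ) (hWW' : K.SSub W W') (Mb : ModelOf.{u} K.τ)
      (hMb : K.SSub Mb W') (hNMb : K.SSub N Mb),
      K.IsLimitOver μ Mb M₀ ∧ K.incl hWW' b ∈ Set.range (K.incl hMb) ∧
      ¬ K.MuSplits μ (K.ssub_mem hWW').2 hMb hNMb (K.incl hWW' (K.incl hMW a))

/-- `K` has `μ`-symmetry. -/
def HasSymmetry (μ : Cardinal.{u}) : Prop :=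
  K.HasSymmetryAux μ (fun _ => True)

end AEC

namespace SemiStabAux

theorem sigE_elim {L : FirstOrder.Language.{u, u}} {Mc : Type u} [L.Structure Mc] {ι : Type v}
    {P Q : Σ n : ℕ, L.Term (ULift.{u} (Fin n)) × (Fin n → ι)} (h : P = Q) :
    ∃ e : P.1 = Q.1, (∀ p, P.2.2 p = Q.2.2 (p.cast e)) ∧
      ∀ w : ULift.{u} (Fin Q.1) → Mc,
        P.2.1.realize (fun y => w ⟨y.down.cast e⟩) = Q.2.1.realize w := by
  subst h
  exact ⟨rfl, fun p => rfl, fun w => rfl⟩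

theorem sig2_elim {D : Type v} {P Q : Σ n : ℕ, Σ m : ℕ, Fin n → Fin m → D} (h : P = Q) :
    ∃ (e1 : P.1 = Q.1) (e2 : P.2.1 = Q.2.1),
      ∀ p q, P.2.2 p q = Q.2.2 (p.cast e1) (q.cast e2) := by
  subst h
  exact ⟨rfl, rfl, fun p q => rfl⟩

/-- The receiving linear order for the order-embedding construction. -/
@[reducible]
def auxJ (I : Type u) : Type u := Lex ((WithTop I) × (Lex ((ULift.{u} Bool) × I)))

noncomputable instance auxJLO (I : Type u) [LinearOrder I] : LinearOrder (auxJ I) :=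
  inferInstanceAs (LinearOrder (Lex ((WithTop I) × (Lex ((ULift.{u} Bool) × I)))))

/-- The canonical embedding of `I` into `auxJ I`. -/
def auxι {I : Type u} [LinearOrder I] (i₀ : I) (j : I) : auxJ I :=
  toLex ((j : WithTop I), toLex (⟨true⟩, i₀))

theorem auxι_strictMono {I : Type u} [LinearOrder I] (i₀ : I) : StrictMono (auxι i₀) := by
  intro a b hab
  exact Prod.Lex.lt_iff.2 (Or.inl (WithTop.coe_lt_coe.2 hab))

open Classical in
/-- The order embedding determined by a partial monotone map `σ` on `S`. -/
noncomputable def auxf {I : Type u} [LinearOrder I] [WellFoundedLT I]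
    (S : Set I) (σ : I → I) (i₀ : I) (i : I) : auxJ I :=
  if i ∈ S then auxι i₀ (σ i)
  else toLex ((if h : {s | s ∈ S ∧ i < s}.Nonempty then
      ((σ (wellFounded_lt.min _ h) : I) : WithTop I) else (⊤ : WithTop I)),
    toLex (⟨false⟩, i))

theorem auxf_mem {I : Type u} [LinearOrder I] [WellFoundedLT I]
    {S : Set I} {σ : I → I} {i₀ : I} {i : I} (h : i ∈ S) :
    auxf S σ i₀ i = auxι i₀ (σ i) := by
  simp [auxf, h]

theorem upFalse_lt_upTrue : ((⟨false⟩ : ULift.{u} Bool)) < ⟨true⟩ := by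
  have : (false : Bool) < true := by decide
  exact this

theorem auxf_strictMono {I : Type u} [LinearOrder I] [WellFoundedLT I]
    {S : Set I} {σ : I → I} {i₀ : I}
    (hσ : ∀ i ∈ S, ∀ j ∈ S, i < j → σ i < σ j) :
    StrictMono (auxf S σ i₀) := by
  classical
  intro i j hij
  by_cases hi : i ∈ S <;> by_cases hj : j ∈ S
  · rw [auxf_mem hi, auxf_mem hj]
    exact auxι_strictMono i₀ (hσ i hi j hj hij)
  · rw [auxf_mem hi]
    rw [auxf, if_neg hj]
    refine Prod.Lex.lt_iff.2 ?_
    by_cases hne : {s | s ∈ S ∧ j < s}.Nonempty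
    · rw [dif_pos hne]
      have hmem := wellFounded_lt.min_mem _ hne
      exact Or.inl (WithTop.coe_lt_coe.2 (hσ i hi _ hmem.1 (hij.trans hmem.2)))
    · rw [dif_neg hne]
      exact Or.inl (WithTop.coe_lt_top _)
  · rw [auxf_mem hj]
    rw [auxf, if_neg hi]
    have hne : {s | s ∈ S ∧ i < s}.Nonempty := ⟨j, hj, hij⟩
    rw [dif_pos hne]
    have hmem := wellFounded_lt.min_mem _ hne
    have hminle : wellFounded_lt.min {s | s ∈ S ∧ i < s} hne ≤ j := by
      by_contra hcon
      exact wellFounded_lt.not_lt_min {s | s ∈ S ∧ i < s} (x := j) ⟨hj, hij⟩ (lt_of_not_ge hcon)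
    refine Prod.Lex.lt_iff.2 ?_
    rcases lt_or_eq_of_le hminle with hlt | heq
    · exact Or.inl (WithTop.coe_lt_coe.2 (hσ _ hmem.1 j hj hlt))
    · refine Or.inr ⟨by rw [heq]; rfl, ?_⟩
      exact Prod.Lex.lt_iff.2 (Or.inl upFalse_lt_upTrue.{u})
  · rw [auxf, if_neg hi, auxf, if_neg hj]
    refine Prod.Lex.lt_iff.2 ?_
    by_cases hnej : {s | s ∈ S ∧ j < s}.Nonempty
    · have hnei : {s | s ∈ S ∧ i < s}.Nonempty := by
        obtain ⟨s, hs, hjs⟩ := hnej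
        exact ⟨s, hs, hij.trans hjs⟩
      rw [dif_pos hnei, dif_pos hnej]
      have hmemj := wellFounded_lt.min_mem _ hnej
      have hmemi := wellFounded_lt.min_mem _ hnei
      have hminle : wellFounded_lt.min {s | s ∈ S ∧ i < s} hnei ≤
          wellFounded_lt.min {s | s ∈ S ∧ j < s} hnej := by
        by_contra hcon
        exact wellFounded_lt.not_lt_min {s | s ∈ S ∧ i < s} ⟨hmemj.1, hij.trans hmemj.2⟩
          (lt_of_not_ge hcon)
      rcases lt_or_eq_of_le hminle with hlt | heq
      · exact Or.inl (WithTop.coe_lt_coe.2 (hσ _ hmemi.1 _ hmemj.1 hlt))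
      · refine Or.inr ⟨by rw [heq]; rfl, ?_⟩
        exact Prod.Lex.lt_iff.2 (Or.inr ⟨rfl, hij⟩)
    · rw [dif_neg hnej]
      by_cases hnei : {s | s ∈ S ∧ i < s}.Nonempty
      · rw [dif_pos hnei]
        exact Or.inl (WithTop.coe_lt_top _)
      · rw [dif_neg hnei]
        exact Or.inr ⟨rfl, Prod.Lex.lt_iff.2 (Or.inr ⟨rfl, hij⟩)⟩

theorem sigma_nat_le {μ : Cardinal.{u}} (hμ : ℵ₀ ≤ μ) (g : ℕ → Type u)
    (hg : ∀ n, #(g n) ≤ μ) : #(Σ n, g n) ≤ μ := by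
  rw [Cardinal.mk_sigma]
  calc Cardinal.sum (fun n => #(g n)) ≤ Cardinal.sum (fun _ : ℕ => μ) :=
        Cardinal.sum_le_sum _ _ hg
    _ = Cardinal.lift.{u} #ℕ * Cardinal.lift.{0} μ := Cardinal.sum_const ℕ μ
    _ ≤ μ := by
        simp only [Cardinal.mk_nat, Cardinal.lift_aleph0, Cardinal.lift_id, Cardinal.lift_id']
        rw [Cardinal.mul_eq_max le_rfl hμ]
        exact max_le hμ le_rfl
  
end SemiStabAux

theorem EMBlueprint.exists_rep {K : AEC.{u}} (Φ : EMBlueprint K) (I : Type u) [LinearOrder I]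
    (z : (Φ.EM I).carrier) :
    ∃ P : Σ n : ℕ, Φ.τΦ.Term (ULift.{u} (Fin n)) × (Fin n → I),
      P.2.1.realize (fun y => Φ.emMap I (P.2.2 y.down)) = z := by
  classical
  have hz : z ∈ FirstOrder.Language.Substructure.closure Φ.τΦ (Set.range (Φ.emMap I)) := by
    rw [Φ.gen]; trivial
  obtain ⟨t, ht⟩ := FirstOrder.Language.Substructure.mem_closure_iff_exists_term.mp hz
  have hsub : ↑t.varFinset ⊆ (↑t.varFinset : Set ↥(Set.range (Φ.emMap I))) := subset_rfl
  set t1 := t.restrictVar (Set.inclusion hsub) with ht1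
  set n := t.varFinset.card with hn
  let efin : ↥(↑t.varFinset : Set ↥(Set.range (Φ.emMap I))) ≃ Fin n :=
    (Equiv.subtypeEquivRight (fun x => by simp)).trans t.varFinset.equivFin
  set t2 := t1.relabel (fun y => (⟨efin y⟩ : ULift.{u} (Fin n))) with ht2
  have hpre : ∀ y : ↥(↑t.varFinset : Set ↥(Set.range (Φ.emMap I))), ∃ i, Φ.emMap I i = ↑↑y :=
    fun y => (y : ↥(Set.range (Φ.emMap I))).2
  choose pre hpre' using hpre
  refine ⟨⟨n, t2, fun k => pre (efin.symm k)⟩, ?_⟩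
  show t2.realize (fun y => Φ.emMap I (pre (efin.symm y.down))) = z
  rw [ht2, FirstOrder.Language.Term.realize_relabel]
  have hfun : ((fun y : ULift.{u} (Fin n) => Φ.emMap I (pre (efin.symm y.down))) ∘
      (fun y => (⟨efin y⟩ : ULift.{u} (Fin n)))) =
      ((fun y : ↥(Set.range (Φ.emMap I)) => (y : (Φ.EM I).carrier)) ∘ Subtype.val) := by
    funext y
    simp only [Function.comp_apply, Equiv.symm_apply_apply]
    exact hpre' y
  rw [hfun, ht1, FirstOrder.Language.Term.realize_restrictVar' hsub]
  exact ht

/-- Local stability in EM models: if `K` is semisolvable in `lam > LS (K)` then for any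
model `M` of cardinality `lam`, any set `A ⊆ |M|` with `|A| = μ` (where `LS (K) ≤ μ`,
`μ = μ ^ κ`, `μ < lam`), there are at most `μ` Galois types of `κ`-tuples over `A` in `M`. -/
theorem semisolvable_stability (K : AEC.{u}) (lam : Cardinal.{u}) (h1 : K.LS < lam)
    (hs : K.Semisolvable lam) (μ κ : Cardinal.{u})
    (hμ1 : K.LS ≤ μ) (hμ2 : μ = μ ^ κ) (hμ3 : μ < lam)
    (M : ModelOf.{u} K.τ) (hM : M ∈ K.Mem) (hMcard : #M.carrier = lam)
    (A : Set M.carrier) (hA : #↥A = μ) :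
    K.gSCard hM A κ.ord.ToType ≤ μ := by
  classical
  obtain ⟨Φ, hΦLS, hUniv⟩ := hs
  set I := lam.ord.ToType with hIdef
  have hIcard : #I = lam := by rw [Cardinal.mk_toType, Cardinal.card_ord]
  obtain ⟨hNmem, hNcard, hNU⟩ := hUniv I inferInstance hIcard
  obtain ⟨h, hKh⟩ := hNU M hM hMcard
  -- canonical term representations of elements of the EM model
  choose ρ hρ using fun z => Φ.exists_rep I z
  let nn : (Φ.EM I).carrier → ℕ := fun z => (ρ z).1
  let tm : ∀ z : (Φ.EM I).carrier, Φ.τΦ.Term (ULift.{u} (Fin (nn z))) := fun z => (ρ z).2.1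
  let uu : ∀ z : (Φ.EM I).carrier, Fin (nn z) → I := fun z => (ρ z).2.2
  have hμinf : ℵ₀ ≤ μ := le_trans K.infinite_LS hμ1
  -- the support of the base set A
  let SA : Set I := ⋃ a : ↥A, Set.range (uu (h ↑a))
  have hSAcard : #↥SA ≤ μ := by
    refine le_trans (Cardinal.mk_iUnion_le _) ?_
    have h1 : ⨆ a : ↥A, #↥(Set.range (uu (h ↑a))) ≤ ℵ₀ :=
      ciSup_le' fun a => le_of_lt ((Set.finite_range _).lt_aleph0)
    calc #↥A * ⨆ a : ↥A, #↥(Set.range (uu (h ↑a))) ≤ μ * ℵ₀ := by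
          exact mul_le_mul' (le_of_eq hA) h1
      _ = μ := by rw [Cardinal.mul_eq_max hμinf le_rfl]; exact max_eq_left hμinf
  -- cut data relative to SA
  let WT := WithTop ↥SA
  let mAb : I → WT := fun i =>
    if hne : {j | j ∈ SA ∧ i ≤ j}.Nonempty then
      ((⟨wellFounded_lt.min _ hne, (wellFounded_lt.min_mem _ hne).1⟩ : ↥SA) : WT) else ⊤
  let sdA : I → WT := fun i => if hmem : i ∈ SA then ((⟨i, hmem⟩ : ↥SA) : WT) else ⊤
  let cd : I → WT × WT := fun i => (mAb i, sdA i)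
  have hle : ∀ (i : I) (a : ↥SA), i ≤ ↑a ↔ mAb i ≤ (a : WT) := by
    intro i a
    show _ ↔ (if hne : {j | j ∈ SA ∧ i ≤ j}.Nonempty then _ else ⊤) ≤ _
    by_cases hne : {j | j ∈ SA ∧ i ≤ j}.Nonempty
    · rw [dif_pos hne]
      have hmm := wellFounded_lt.min_mem _ hne
      constructor
      · intro hia
        rw [WithTop.coe_le_coe, Subtype.mk_le_mk]
        by_contra hcon
        exact wellFounded_lt.not_lt_min {j | j ∈ SA ∧ i ≤ j} (x := ↑a) ⟨a.2, hia⟩ (lt_of_not_ge hcon)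
      · intro hcon
        rw [WithTop.coe_le_coe, Subtype.mk_le_mk] at hcon
        exact le_trans hmm.2 hcon
    · rw [dif_neg hne]
      constructor
      · intro hia; exact (hne ⟨↑a, a.2, hia⟩).elim
      · intro hcon; exact (WithTop.coe_ne_top (top_le_iff.mp hcon)).elim
  have heqA : ∀ (i : I) (a : ↥SA), i = ↑a ↔ sdA i = (a : WT) := by
    intro i a
    show _ ↔ (if hmem : i ∈ SA then _ else ⊤) = _
    by_cases hmem : i ∈ SA
    · rw [dif_pos hmem, WithTop.coe_inj]
      constructor
      · intro hia; exact Subtype.ext hia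
      · intro hia; exact congrArg Subtype.val hia
    · rw [dif_neg hmem]
      constructor
      · intro hia; exact absurd (hia ▸ a.2) hmem
      · intro hcon; exact absurd hcon.symm WithTop.coe_ne_top
  -- the invariant
  let κT := κ.ord.ToType
  let E := Σ n : ℕ, Φ.τΦ.Term (ULift.{u} (Fin n)) × (Fin n → WT × WT)
  let E2 := Σ n : ℕ, Σ m : ℕ, Fin n → Fin m → ULift.{u} (Bool × Bool)
  let inv : (κT → M.carrier) → (κT → E) × (κT × κT → E2) := fun b =>
    (fun x => ⟨nn (h (b x)), (tm (h (b x)), fun p => cd (uu (h (b x)) p))⟩,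
     fun xy => ⟨nn (h (b xy.1)), nn (h (b xy.2)), fun p q =>
       ⟨(decide (uu (h (b xy.1)) p ≤ uu (h (b xy.2)) q),
         decide (uu (h (b xy.1)) p = uu (h (b xy.2)) q))⟩⟩)
  let J := SemiStabAux.auxJ I
  -- key: equal invariants imply equal Galois types
  have key : ∀ b c : κT → M.carrier, inv b = inv c → K.gtpEqOver hM A b c := by
    intro b c hbc
    have hc1 : ∀ x : κT, ((inv b).1 x) = ((inv c).1 x) := fun x =>
      congrFun (congrArg Prod.fst hbc) x
    have hc2 : ∀ xy : κT × κT, ((inv b).2 xy) = ((inv c).2 xy) := fun xy =>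
      congrFun (congrArg Prod.snd hbc) xy
    choose e hcd hre using fun x => SemiStabAux.sigE_elim (Mc := (Φ.EM J).carrier) (hc1 x)
    -- order comparisons transferred
    have hcmp : ∀ (x y : κT) (p : Fin (nn (h (b x)))) (q : Fin (nn (h (b y)))),
        ((uu (h (b x)) p ≤ uu (h (b y)) q ↔
          uu (h (c x)) (p.cast (e x)) ≤ uu (h (c y)) (q.cast (e y))) ∧
         (uu (h (b x)) p = uu (h (b y)) q ↔
          uu (h (c x)) (p.cast (e x)) = uu (h (c y)) (q.cast (e y)))) := by
      intro x y p q
      obtain ⟨e1, e2, hpq⟩ := SemiStabAux.sig2_elim (hc2 (x, y))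
      have hpq' := congrArg ULift.down (hpq p q)
      rw [Prod.mk.injEq] at hpq'
      exact ⟨decide_eq_decide.mp hpq'.1, decide_eq_decide.mp hpq'.2⟩
    -- supports
    let SB : Set I := ⋃ x : κT, Set.range (uu (h (b x)))
    let S : Set I := SA ∪ SB
    let σ : I → I := fun i =>
      if hiA : i ∈ SA then i
      else if hib : ∃ x p, uu (h (b x)) p = i then
        uu (h (c hib.choose)) ((hib.choose_spec.choose).cast (e hib.choose))
      else i
    have hcd' : ∀ (x : κT) (p : Fin (nn (h (b x)))),
        cd (uu (h (b x)) p) = cd (uu (h (c x)) (p.cast (e x))) := fun x p => hcd x p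
    -- comparison with elements of SA transfers
    have cA1 : ∀ (x : κT) (p : Fin (nn (h (b x)))) (a : ↥SA),
        uu (h (b x)) p ≤ ↑a ↔ uu (h (c x)) (p.cast (e x)) ≤ ↑a := by
      intro x p a
      rw [hle _ a, hle _ a]
      rw [show mAb (uu (h (b x)) p) = mAb (uu (h (c x)) (p.cast (e x))) from
        congrArg Prod.fst (hcd' x p)]
    have cA2 : ∀ (x : κT) (p : Fin (nn (h (b x)))) (a : ↥SA),
        uu (h (b x)) p = ↑a ↔ uu (h (c x)) (p.cast (e x)) = ↑a := by
      intro x p a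
      rw [heqA _ a, heqA _ a]
      rw [show sdA (uu (h (b x)) p) = sdA (uu (h (c x)) (p.cast (e x))) from
        congrArg Prod.snd (hcd' x p)]
    -- σ matches the supports of b and c
    have W1 : ∀ (x : κT) (p : Fin (nn (h (b x)))),
        σ (uu (h (b x)) p) = uu (h (c x)) (p.cast (e x)) := by
      intro x p
      show (if hiA : uu (h (b x)) p ∈ SA then _ else _) = _
      by_cases hiA : uu (h (b x)) p ∈ SA
      · rw [dif_pos hiA]
        exact ((cA2 x p ⟨_, hiA⟩).mp rfl).symm
      · rw [dif_neg hiA]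
        have hib : ∃ y q, uu (h (b y)) q = uu (h (b x)) p := ⟨x, p, rfl⟩
        rw [dif_pos hib]
        have hspec : uu (h (b hib.choose)) hib.choose_spec.choose = uu (h (b x)) p :=
          hib.choose_spec.choose_spec
        exact ((hcmp hib.choose x hib.choose_spec.choose p).2.mp hspec)
    have hSAsub : SA ⊆ S := Set.subset_union_left
    have hSBsub : ∀ (x : κT) (p : Fin (nn (h (b x)))), uu (h (b x)) p ∈ S :=
      fun x p => Set.mem_union_right _ (Set.mem_iUnion.mpr ⟨x, Set.mem_range_self p⟩)
    have hσA : ∀ i (hi : i ∈ SA), σ i = i := fun i hi => dif_pos hi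
    -- σ is strictly monotone on S
    have W2 : ∀ i ∈ S, ∀ j ∈ S, i < j → σ i < σ j := by
      intro i hi j hj hij
      have hform : ∀ k, k ∈ S → k ∈ SA ∨ ∃ x p, uu (h (b x)) p = k := by
        intro k hk
        rcases hk with hk | hk
        · exact Or.inl hk
        · right
          obtain ⟨x, hx⟩ := Set.mem_iUnion.mp hk
          obtain ⟨p, hp⟩ := hx
          exact ⟨x, p, hp⟩
      rcases hform i hi with hiA | ⟨x, p, rfl⟩ <;> rcases hform j hj with hjA | ⟨y, q, rfl⟩
      · rw [hσA i hiA, hσA j hjA]; exact hij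
      · rw [hσA i hiA, W1 y q]
        have : ¬ (uu (h (b y)) q ≤ i) := not_le.mpr hij
        have h2 : ¬ (uu (h (c y)) (q.cast (e y)) ≤ ↑(⟨i, hiA⟩ : ↥SA)) := by
          intro hcon; exact this ((cA1 y q ⟨i, hiA⟩).mpr hcon)
        exact not_le.mp h2
      · rw [hσA j hjA, W1 x p]
        have hle' : uu (h (c x)) (p.cast (e x)) ≤ ↑(⟨j, hjA⟩ : ↥SA) :=
          (cA1 x p ⟨j, hjA⟩).mp (le_of_lt hij)
        have hne' : uu (h (c x)) (p.cast (e x)) ≠ j := by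
          intro hcon
          exact (ne_of_lt hij) ((cA2 x p ⟨j, hjA⟩).mpr hcon)
        exact lt_of_le_of_ne hle' hne'
      · rw [W1 x p, W1 y q]
        have hle' := ((hcmp x y p q).1).mp (le_of_lt hij)
        have hne' : uu (h (c x)) (p.cast (e x)) ≠ uu (h (c y)) (q.cast (e y)) := by
          intro hcon
          exact (ne_of_lt hij) (((hcmp x y p q).2).mpr hcon)
        exact lt_of_le_of_ne hle' hne'
    -- the order embeddings
    have hi0 : Nonempty I := by
      rw [← Cardinal.mk_ne_zero_iff, hIcard]
      exact ne_of_gt (lt_of_lt_of_le aleph0_pos (le_trans K.infinite_LS (le_of_lt h1)))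
    obtain ⟨i₀⟩ := hi0
    let f : I → J := SemiStabAux.auxf S σ i₀
    have hfs : StrictMono f := SemiStabAux.auxf_strictMono W2
    have hιs : StrictMono (SemiStabAux.auxι (I := I) i₀) := SemiStabAux.auxι_strictMono i₀
    let fOE : I ↪o J := OrderEmbedding.ofStrictMono f hfs
    let ιOE : I ↪o J := OrderEmbedding.ofStrictMono _ hιs
    obtain ⟨F, hFK, hFe⟩ := Φ.red_ssub I J fOE
    obtain ⟨G, hGK, hGe⟩ := Φ.red_ssub I J ιOE
    -- f and ι agree on SA and match supports
    have hfι : ∀ i ∈ SA, fOE i = ιOE i := by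
      intro i hi
      show SemiStabAux.auxf S σ i₀ i = SemiStabAux.auxι i₀ i
      rw [SemiStabAux.auxf_mem (hSAsub hi), hσA i hi]
    have hfmatch : ∀ (x : κT) (p : Fin (nn (h (b x)))),
        fOE (uu (h (b x)) p) = ιOE (uu (h (c x)) (p.cast (e x))) := by
      intro x p
      show SemiStabAux.auxf S σ i₀ _ = SemiStabAux.auxι i₀ _
      rw [SemiStabAux.auxf_mem (hSBsub x p), W1 x p]
    -- agreement on (the image of) A
    have hagree : ∀ a : ↥A, F (h ↑a) = G (h ↑a) := by
      intro a
      refine (hFe (h ↑a)).trans (Eq.trans ?_ (hGe (h ↑a)).symm)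
      have hmemGen : ∀ z : (Φ.EM I).carrier, Set.range (uu z) ⊆ SA →
          z ∈ FirstOrder.Language.Substructure.closure Φ.τΦ (Φ.emMap I '' SA) := by
        intro z hz
        rw [← hρ z]
        apply FirstOrder.Language.Term.realize_mem
        intro y
        exact FirstOrder.Language.Substructure.subset_closure
          ⟨uu z y.down, hz (Set.mem_range_self _), rfl⟩
      have hmemA := hmemGen (h ↑a)
        (by intro i hi; exact Set.mem_iUnion.mpr ⟨a, hi⟩)
      have heqon : Set.EqOn (⇑(Φ.emb I J fOE).toHom) (⇑(Φ.emb I J ιOE).toHom)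
          (Φ.emMap I '' SA) := by
        rintro _ ⟨i, hi, rfl⟩
        show (Φ.emb I J fOE) (Φ.emMap I i) = (Φ.emb I J ιOE) (Φ.emMap I i)
        rw [Φ.emb_emMap, Φ.emb_emMap, hfι i hi]
      exact FirstOrder.Language.Hom.eqOn_closure heqon hmemA
    -- matching of the tuples
    have htuple : ∀ x : κT, F (h (b x)) = G (h (c x)) := by
      intro x
      refine (hFe (h (b x))).trans (Eq.trans ?_ (hGe (h (c x))).symm)
      conv_lhs => rw [← hρ (h (b x))]
      conv_rhs => rw [← hρ (h (c x))]
      rw [← FirstOrder.Language.HomClass.realize_term (Φ.emb I J fOE),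
        ← FirstOrder.Language.HomClass.realize_term (Φ.emb I J ιOE)]
      have hstep : (fun y : ULift.{u} (Fin (nn (h (b x)))) =>
          (Φ.emb I J fOE) (Φ.emMap I (uu (h (b x)) y.down))) =
          fun y => (fun w : ULift.{u} (Fin (nn (h (c x)))) =>
            (Φ.emb I J ιOE) (Φ.emMap I (uu (h (c x)) w.down))) ⟨y.down.cast (e x)⟩ := by
        funext y
        show (Φ.emb I J fOE) (Φ.emMap I (uu (h (b x)) y.down)) =
          (Φ.emb I J ιOE) (Φ.emMap I (uu (h (c x)) (y.down.cast (e x))))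
        rw [Φ.emb_emMap, Φ.emb_emMap, hfmatch x y.down]
      calc (tm (h (b x))).realize ((Φ.emb I J fOE) ∘ fun y => Φ.emMap I (uu (h (b x)) y.down))
          = (tm (h (b x))).realize (fun y => (fun w : ULift.{u} (Fin (nn (h (c x)))) =>
              (Φ.emb I J ιOE) (Φ.emMap I (uu (h (c x)) w.down))) ⟨y.down.cast (e x)⟩) := by
            rw [show ((Φ.emb I J fOE) ∘ fun y => Φ.emMap I (uu (h (b x)) y.down)) =
              (fun y : ULift.{u} (Fin (nn (h (b x)))) =>
                (Φ.emb I J fOE) (Φ.emMap I (uu (h (b x)) y.down))) from rfl, hstep]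
        _ = (tm (h (c x))).realize (fun w => (Φ.emb I J ιOE) (Φ.emMap I (uu (h (c x)) w.down))) :=
            hre x (fun w => (Φ.emb I J ιOE) (Φ.emMap I (uu (h (c x)) w.down)))
        _ = (tm (h (c x))).realize ((Φ.emb I J ιOE) ∘ fun w => Φ.emMap I (uu (h (c x)) w.down)) :=
            rfl
    -- assemble the equivalence chain
    have hreflK : K.IsKEmb (FirstOrder.Language.Embedding.refl K.τ (Φ.red I).carrier) := by
      refine ⟨Φ.red I, K.ssub_refl _ hNmem, FirstOrder.Language.Equiv.refl _ _, fun x => ?_⟩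
      simpa using K.incl_refl _ (K.ssub_refl _ hNmem) x
    have atom1 : K.gtpAtom (⟨M, hM, Subtype.val, b⟩ : AEC.PTy K κT ↥A)
        ⟨Φ.red I, hNmem, fun a => h ↑a, fun x => h (b x)⟩ :=
      ⟨Φ.red I, hNmem, h, FirstOrder.Language.Embedding.refl K.τ (Φ.red I).carrier,
        hKh, hreflK, fun x => (FirstOrder.Language.Embedding.refl_apply _).symm,
        fun x => (FirstOrder.Language.Embedding.refl_apply _).symm⟩
    have atom2 : K.gtpAtom (⟨Φ.red I, hNmem, fun a => h ↑a, fun x => h (b x)⟩ : AEC.PTy K κT ↥A)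
        ⟨Φ.red I, hNmem, fun a => h ↑a, fun x => h (c x)⟩ :=
      ⟨Φ.red J, Φ.red_mem' J, F, G, hFK, hGK, fun a => hagree a, fun x => htuple x⟩
    have atom3 : K.gtpAtom (⟨Φ.red I, hNmem, fun a => h ↑a, fun x => h (c x)⟩ : AEC.PTy K κT ↥A)
        (⟨M, hM, Subtype.val, c⟩ : AEC.PTy K κT ↥A) :=
      ⟨Φ.red I, hNmem, FirstOrder.Language.Embedding.refl K.τ (Φ.red I).carrier, h,
        hreflK, hKh, fun x => FirstOrder.Language.Embedding.refl_apply _,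
        fun x => FirstOrder.Language.Embedding.refl_apply _⟩
    exact Relation.EqvGen.trans _ _ _ (Relation.EqvGen.rel _ _ atom1)
      (Relation.EqvGen.trans _ _ _ (Relation.EqvGen.rel _ _ atom2)
        (Relation.EqvGen.rel _ _ atom3))
  -- counting
  show #(Quot fun b c : κT → M.carrier => K.gtpEqOver hM A b c) ≤ μ
  have hκT : #κT = κ := by rw [Cardinal.mk_toType, Cardinal.card_ord]
  have hWT : #(WT × WT) ≤ μ := by
    have h1 : #WT ≤ μ := by
      have : #WT = #↥SA + 1 := Cardinal.mk_option
      rw [this]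
      calc #↥SA + 1 ≤ μ + μ := add_le_add hSAcard (le_trans (le_of_lt one_lt_aleph0) hμinf)
        _ = μ := Cardinal.add_eq_self hμinf
    rw [Cardinal.mk_prod]
    simp only [Cardinal.lift_id]
    calc #WT * #WT ≤ μ * μ := mul_le_mul' h1 h1
      _ = μ := Cardinal.mul_eq_self hμinf
  have hτcard : #(Σ i, Φ.τΦ.Functions i) ≤ μ := by
    have h1 : #(Σ i, Φ.τΦ.Functions i) ≤ Φ.τΦ.card := by
      rw [FirstOrder.Language.card, FirstOrder.Language.Symbols, Cardinal.mk_sum]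
      simp only [Cardinal.lift_id]
      exact self_le_add_right _ _
    exact le_trans h1 (le_trans hΦLS hμ1)
  have hE : #E ≤ μ := by
    refine SemiStabAux.sigma_nat_le hμinf _ (fun n => ?_)
    rw [Cardinal.mk_prod]
    simp only [Cardinal.lift_id]
    have hterm : #(Φ.τΦ.Term (ULift.{u} (Fin n))) ≤ μ := by
      refine le_trans FirstOrder.Language.Term.card_le ?_
      refine max_le hμinf ?_
      rw [Cardinal.mk_sum]
      simp only [Cardinal.lift_id]
      calc #(ULift.{u} (Fin n)) + #(Σ i, Φ.τΦ.Functions i) ≤ μ + μ := by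
            refine add_le_add ?_ hτcard
            rw [Cardinal.mk_fintype]
            simp only [Fintype.card_ulift, Fintype.card_fin]
            exact le_trans (le_of_lt (Cardinal.nat_lt_aleph0 n)) hμinf
        _ = μ := Cardinal.add_eq_self hμinf
    have hfn : #(Fin n → WT × WT) ≤ μ := by
      rw [Cardinal.mk_arrow]
      simp only [Cardinal.lift_uzero, Cardinal.lift_mk_fin]
      rw [Cardinal.power_natCast]
      exact le_trans (pow_le_pow_left' hWT n) (Cardinal.power_nat_le hμinf)
    calc #(Φ.τΦ.Term (ULift.{u} (Fin n))) * #(Fin n → WT × WT) ≤ μ * μ :=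
          mul_le_mul' hterm hfn
      _ = μ := Cardinal.mul_eq_self hμinf
  have hE2 : #E2 ≤ μ := by
    refine SemiStabAux.sigma_nat_le hμinf _ (fun n => ?_)
    refine SemiStabAux.sigma_nat_le hμinf _ (fun m => ?_)
    exact le_trans (le_of_lt (Cardinal.lt_aleph0_of_finite _)) hμinf
  have hT1 : #(κT → E) ≤ μ := by
    rw [← Cardinal.power_def, hκT]
    calc #E ^ κ ≤ μ ^ κ := Cardinal.power_le_power_right hE
      _ = μ := hμ2.symm
  have hT2 : #(κT × κT → E2) ≤ μ := by
    rw [← Cardinal.power_def]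
    have : #(κT × κT) = κ * κ := by
      simp only [Cardinal.mk_prod, Cardinal.lift_id, hκT]
    rw [this]
    calc #E2 ^ (κ * κ) ≤ μ ^ (κ * κ) := Cardinal.power_le_power_right hE2
      _ = (μ ^ κ) ^ κ := Cardinal.power_mul
      _ = μ := by rw [← hμ2, ← hμ2]
  have hT : #((κT → E) × (κT × κT → E2)) ≤ μ := by
    rw [Cardinal.mk_prod]
    simp only [Cardinal.lift_id]
    calc #(κT → E) * #(κT × κT → E2) ≤ μ * μ := mul_le_mul' hT1 hT2
      _ = μ := Cardinal.mul_eq_self hμinf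
  -- surjection from the range of the invariant onto the quotient
  have hsurj : Function.Surjective
      (fun t : ↥(Set.range inv) =>
        Quot.mk (fun b c : κT → M.carrier => K.gtpEqOver hM A b c) t.2.choose) := by
    intro q
    induction q using Quot.ind with
    | _ b =>
      refine ⟨⟨inv b, ⟨b, rfl⟩⟩, Quot.sound (key _ _ ?_)⟩
      exact (⟨b, rfl⟩ : ∃ b', inv b' = inv b).choose_spec
  exact le_trans (Cardinal.mk_le_of_surjective hsurj)
    (le_trans (Cardinal.mk_subtype_le _) hT)
end
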